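/- Let D be a digraph and let 0 < p < 1. Suppose there exists a random subset X of V(D) (i.e. a probability distribution over subsets of V(D)) such that for every vertex v, the probability that v lies in X but is not popular in X is at least p. Then D admits a fractional majority coloring with total weight at most 1/p. -/
import Mathlib


open scoped Classical

variable {V : Type*} [Fintype V]

/-- The out-neighborhood of `v` in the digraph on `V` with edge relation `E`. -/
noncomputable def outNbrs (E : V → V → Prop) (v : V) : Finset V :=
  Finset.univ.filter (fun w => E v w)

/-- The in-neighborhood of `v` in the digraph on `V` with edge relation `E`. -/
noncomputable def inNbrs (E : V → V → Prop) (v : V) : Finset V :=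
  Finset.univ.filter (fun w => E w v)

/-- `c` is a majority coloring of the digraph `(V, E)`: every vertex `v` has at
most `d⁺(v)/2` out-neighbors `w` with `c w = c v`. -/
def IsMajorityColoring {α : Type*} (E : V → V → Prop) (c : V → α) : Prop :=
  ∀ v : V, 2 * ((outNbrs E v).filter (fun w => c w = c v)).card ≤ (outNbrs E v).card

/-- `l` is the vertex list of a directed cycle: a nonempty list of pairwise
distinct vertices in which each vertex has an edge to the next one, and the
last vertex has an edge back to the first one. -/
def IsDiCycle (E : V → V → Prop) (l : List V) : Prop :=
  l ≠ [] ∧ l.Nodup ∧ l.Chain' E ∧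
    ∃ a b, l.head? = some a ∧ l.getLast? = some b ∧ E b a

/-- All vertices of the list `l` get the same color under `c`. -/
def MonochromaticList {α : Type*} (c : V → α) (l : List V) : Prop :=
  ∀ u ∈ l, ∀ w ∈ l, c u = c w

/-- The digraph `(V, E)` is majority `k`-choosable: for every assignment of
lists of size at least `k` to the vertices there is a majority coloring
choosing each vertex's color from its list. -/
def MajorityChoosable (E : V → V → Prop) (k : ℕ) : Prop :=
  ∀ L : V → Finset ℕ, (∀ v, k ≤ (L v).card) →
    ∃ c : V → ℕ, (∀ v, c v ∈ L v) ∧ IsMajorityColoring E c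

/-- `v` is popular in `S`: `v ∈ S` and more than half of the out-neighbors of
`v` lie in `S`. -/
def Popular (E : V → V → Prop) (v : V) (S : Finset V) : Prop :=
  v ∈ S ∧ (outNbrs E v).card < 2 * ((outNbrs E v).filter (fun w => w ∈ S)).card

/-- `S` is stable: it contains no popular vertex. -/
def StableSet (E : V → V → Prop) (S : Finset V) : Prop :=
  ∀ v : V, ¬ Popular E v S

/-- The digraph `(V, E)` has a fractional majority coloring of total weight at
most `W`: nonnegative weights on the stable sets such that the sets containing
any fixed vertex have weights summing to at least `1`, with all weights summing
to at most `W`. -/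
def HasFracMajorityColoring (E : V → V → Prop) (W : ℝ) : Prop :=
  ∃ w : Finset V → ℝ, (∀ T, 0 ≤ w T) ∧ (∀ T, ¬ StableSet E T → w T = 0) ∧
    (∀ v : V, 1 ≤ ∑ T ∈ Finset.univ.filter (fun T : Finset V => v ∈ T), w T) ∧
    ∑ T : Finset V, w T ≤ W

/-- If there is a random subset `X` of the vertices (a
probability distribution `μ` over subsets) such that every vertex lies in `X`
and is not popular in `X` with probability at least `p` (where `0 < p < 1`),
then the digraph has a fractional majority coloring of total weight at most
`1/p`. -/
theorem fracMajority_of_random_subset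
    {V : Type*} [Fintype V] (E : V → V → Prop) (hloopless : ∀ v : V, ¬ E v v)
    (p : ℝ) (hp0 : 0 < p) (hp1 : p < 1)
    (μ : Finset V → ℝ) (hμ0 : ∀ X : Finset V, 0 ≤ μ X)
    (hμ1 : ∑ X : Finset V, μ X = 1)
    (hgood : ∀ v : V,
      p ≤ ∑ X ∈ Finset.univ.filter
            (fun X : Finset V => v ∈ X ∧ ¬ Popular E v X), μ X) :
    HasFracMajorityColoring E (1 / p) := by
  classical
  set f : Finset V → Finset V := fun X => X.filter (fun v => ¬ Popular E v X) with hf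
  have hmemf : ∀ (v : V) (X : Finset V), v ∈ f X ↔ v ∈ X ∧ ¬ Popular E v X := by
    intro v X; simp [hf]
  have hstable : ∀ X, StableSet E (f X) := by
    intro X v hv
    obtain ⟨hvmem, hcard⟩ := hv
    rw [hmemf] at hvmem
    apply hvmem.2
    refine ⟨hvmem.1, lt_of_lt_of_le hcard ?_⟩
    have hsub : (outNbrs E v).filter (fun w => w ∈ f X) ⊆
        (outNbrs E v).filter (fun w => w ∈ X) := by
      intro w hw
      simp only [Finset.mem_filter, hmemf] at hw ⊢
      exact ⟨hw.1, hw.2.1⟩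
    exact Nat.mul_le_mul_left 2 (Finset.card_le_card hsub)
  have key : ∀ v : V, ∑ T ∈ Finset.univ.filter (fun T : Finset V => v ∈ T),
      ∑ X ∈ Finset.univ.filter (fun X => f X = T), μ X
      = ∑ X ∈ Finset.univ.filter (fun X : Finset V => v ∈ f X), μ X := by
    intro v
    rw [Finset.sum_filter, Finset.sum_filter,
      ← Finset.sum_fiberwise Finset.univ f (fun X => if v ∈ f X then μ X else 0)]
    apply Finset.sum_congr rfl
    intro T _
    split_ifs with h
    · apply Finset.sum_congr rfl
      intro X hX
      simp only [Finset.mem_filter] at hX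
      rw [if_pos (hX.2 ▸ h)]
    · refine (Finset.sum_eq_zero ?_).symm
      intro X hX
      simp only [Finset.mem_filter] at hX
      rw [if_neg (hX.2 ▸ h)]
  refine ⟨fun T => (1 / p) * ∑ X ∈ Finset.univ.filter (fun X => f X = T), μ X,
    ?_, ?_, ?_, ?_⟩
  · intro T
    apply mul_nonneg (by positivity)
    exact Finset.sum_nonneg fun X _ => hμ0 X
  · intro T hT
    have : Finset.univ.filter (fun X => f X = T) = ∅ := by
      refine Finset.filter_eq_empty_iff.mpr ?_
      intro X _ hXT
      exact hT (hXT ▸ hstable X)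
    simp [this]
  · intro v
    rw [← Finset.mul_sum, key v]
    have hs : p ≤ ∑ X ∈ Finset.univ.filter (fun X : Finset V => v ∈ f X), μ X := by
      have : (Finset.univ.filter (fun X : Finset V => v ∈ f X)) =
          Finset.univ.filter (fun X : Finset V => v ∈ X ∧ ¬ Popular E v X) := by
        apply Finset.filter_congr
        intro X _; simp [hmemf]
      rw [this]; exact hgood v
    rw [ge_iff_le.symm]
    calc (1 : ℝ) = (1 / p) * p := by field_simp
    _ ≤ (1 / p) * ∑ X ∈ Finset.univ.filter (fun X : Finset V => v ∈ f X), μ X := by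
        apply mul_le_mul_of_nonneg_left hs (by positivity)
  · rw [← Finset.mul_sum, Finset.sum_fiberwise Finset.univ f μ, hμ1, mul_one]
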